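/- Suppose there exist real constants α, β, γ and a bounded measurable function ψ : S_X → ℝ such that for every x ∈ S_X and every y_0, y ∈ S_Y: (α f_X(x) + β f_Y(x) + γ) + λ (α g_X(y) + β g_Y(y) + γ) + ((1−λ²)/λ) (α g_X(y_0) + β g_Y(y_0) + γ) = ψ(x) − λ² ∫_{S_X} ψ(s) dσ_X[x,y](s) − (1−λ²) ∫_{S_X} ψ(s) dσ_X^0[y_0](s). Then for every probability measure σ_Y^0 on S_Y and every play distribution (ν_t)_{t≥0} consistent with (σ_X^0[·], σ_X) and σ_Y^0, the average payoffs π_X := (1−λ)[∫_{S_Y} g_X(y_0) dσ_Y^0(y_0) + ∑_{t=0}^∞ λ^{2t+1} ∫_{S_X×S_Y} (f_X(x) + λ g_X(y)) dν_t(x,y)] and π_Y := (1−λ)[∫_{S_Y} g_Y(y_0) dσ_Y^0(y_0) + ∑_{t=0}^∞ λ^{2t+1} ∫_{S_X×S_Y} (f_Y(x) + λ g_Y(y)) dν_t(x,y)] satisfy α π_X + β π_Y + γ = 0. In other words, if player X moves second, the memory-one strategy (σ_X^0[·], σ_X) unilaterally enforces α π_X + β π_Y + γ = 0 for every strategy of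 player Y. -/

import Mathlib

open MeasureTheory

section Aux

variable {A : Type*} [MeasurableSpace A]

lemma bdd_integrable (μ : Measure A) [IsFiniteMeasure μ] {f : A → ℝ} (hm : Measurable f)
    {C : ℝ} (hb : ∀ x, |f x| ≤ C) : Integrable f μ :=
  ⟨hm.aestronglyMeasurable,
    HasFiniteIntegral.of_bounded (C := C) (ae_of_all _ (by simpa [Real.norm_eq_abs] using hb))⟩

lemma bdd_integral_abs_le (μ : Measure A) [IsProbabilityMeasure μ] {f : A → ℝ}
    {C : ℝ} (hb : ∀ x, |f x| ≤ C) : |∫ x, f x ∂μ| ≤ C := by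
  have := norm_integral_le_of_norm_le_const (μ := μ) (f := f) (C := C)
    (ae_of_all _ (by simpa [Real.norm_eq_abs] using hb))
  simpa [Real.norm_eq_abs] using this

end Aux

section Marg

open ProbabilityTheory

lemma bdd_integral_eq {A : Type*} [MeasurableSpace A] (μ : Measure A) [IsProbabilityMeasure μ]
    {f : A → ℝ} (hm : Measurable f) {C : ℝ} (hb : ∀ x, |f x| ≤ C) :
    ∫ x, f x ∂μ = (∫⁻ x, ENNReal.ofReal (f x + C) ∂μ).toReal - C := by
  have h0 : ∀ x, 0 ≤ f x + C := fun x => by have := abs_le.mp (hb x); linarith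
  have h1 : ∫ x, (f x + C) ∂μ = (∫⁻ x, ENNReal.ofReal (f x + C) ∂μ).toReal :=
    integral_eq_lintegral_of_nonneg_ae (ae_of_all _ h0)
      ((hm.add_const C).aestronglyMeasurable)
  have h2 : ∫ x, (f x + C) ∂μ = (∫ x, f x ∂μ) + C := by
    rw [integral_add (bdd_integrable μ hm hb) (integrable_const C), integral_const]
    simp
  linarith [h1, h2]

variable {A B C' : Type*} [MeasurableSpace A] [MeasurableSpace B] [MeasurableSpace C']

lemma marg (μ : Measure A) [IsProbabilityMeasure μ] (κ : Kernel A B) [IsMarkovKernel κ]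
    (ρ : Measure (B × C'))
    (h : ∀ E : Set B, MeasurableSet E → ρ (E ×ˢ (Set.univ : Set C')) = ∫⁻ a, κ a E ∂μ)
    {ψ : B → ℝ} (hψm : Measurable ψ) {C : ℝ} (hψb : ∀ s, |ψ s| ≤ C) :
    ∫ a, (∫ b, ψ b ∂κ a) ∂μ = ∫ p, ψ p.1 ∂ρ := by
  have hκm : Measurable (fun a => κ a) := κ.measurable
  set m : Measure B := μ.bind (fun a => κ a) with hm
  haveI : IsProbabilityMeasure m := by
    constructor
    rw [hm, Measure.bind_apply MeasurableSet.univ hκm.aemeasurable]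
    simp
  have hmap : ρ.map Prod.fst = m := by
    ext E hE
    rw [Measure.map_apply measurable_fst hE, ← Set.prod_univ, h E hE,
      hm, Measure.bind_apply hE hκm.aemeasurable]
  have hR : ∫ p, ψ p.1 ∂ρ = ∫ b, ψ b ∂m := by
    rw [← hmap, integral_map measurable_fst.aemeasurable hψm.aestronglyMeasurable]
  rw [hR]
  have h0 : ∀ x, 0 ≤ ψ x + C := fun x => by have := abs_le.mp (hψb x); linarith
  set φ : B → ENNReal := fun b => ENNReal.ofReal (ψ b + C) with hφ
  have hφm : Measurable φ := (hψm.add_const C).ennreal_ofReal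
  set G : A → ENNReal := fun a => ∫⁻ b, φ b ∂κ a with hG
  have hGm : Measurable G := (Measure.measurable_lintegral hφm).comp hκm
  have hGtop : ∀ a, G a ≤ ENNReal.ofReal (C + C) := by
    intro a
    calc G a ≤ ∫⁻ _, ENNReal.ofReal (C + C) ∂κ a := by
          refine lintegral_mono fun b => ENNReal.ofReal_le_ofReal ?_
          have := abs_le.mp (hψb b); linarith
      _ = ENNReal.ofReal (C + C) := by simp
  have key : ∀ a, (∫ b, ψ b ∂κ a) = (G a).toReal - C := fun a =>
    bdd_integral_eq (κ a) hψm hψb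
  have hint : ∫ a, (∫ b, ψ b ∂κ a) ∂μ = ∫ a, ((G a).toReal - C) ∂μ :=
    integral_congr_ae (ae_of_all _ key)
  have hGint : Integrable (fun a => (G a).toReal) μ := by
    refine bdd_integrable μ hGm.ennreal_toReal (C := |C + C|) fun a => ?_
    rw [abs_of_nonneg ENNReal.toReal_nonneg]
    calc (G a).toReal ≤ (ENNReal.ofReal |C + C|).toReal := by
          refine ENNReal.toReal_mono (by simp) ?_
          exact (hGtop a).trans (ENNReal.ofReal_le_ofReal (le_abs_self _))
      _ = |C + C| := ENNReal.toReal_ofReal (abs_nonneg _)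
  have hGtoReal : ∫ a, (G a).toReal ∂μ = (∫⁻ a, G a ∂μ).toReal :=
    integral_toReal hGm.aemeasurable
      (ae_of_all _ fun a => lt_of_le_of_lt (hGtop a) ENNReal.ofReal_lt_top)
  have hbind : ∫⁻ a, G a ∂μ = ∫⁻ b, φ b ∂m := (Measure.lintegral_bind hκm.aemeasurable hφm.aemeasurable).symm
  rw [hint, integral_sub hGint (integrable_const C), integral_const, hGtoReal, hbind,
    bdd_integral_eq m hψm hψb]
  simp [hφ]

end Marg

theorem stmt_5
    {SX SY : Type*} [MeasurableSpace SX] [MeasurableSpace SY]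
    (lam : ℝ) (hlam0 : 0 < lam) (hlam1 : lam < 1)
    (fX fY : SX → ℝ) (gX gY : SY → ℝ)
    (hfXm : Measurable fX) (hfYm : Measurable fY)
    (hgXm : Measurable gX) (hgYm : Measurable gY)
    (Cf : ℝ) (hfXb : ∀ x, |fX x| ≤ Cf) (hfYb : ∀ x, |fY x| ≤ Cf)
    (hgXb : ∀ y, |gX y| ≤ Cf) (hgYb : ∀ y, |gY y| ≤ Cf)
    (σX0 : ProbabilityTheory.Kernel SY SX) [ProbabilityTheory.IsMarkovKernel σX0]
    (σX : ProbabilityTheory.Kernel (SX × SY) SX) [ProbabilityTheory.IsMarkovKernel σX]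
    (α β γ : ℝ)
    (ψ : SX → ℝ) (hψm : Measurable ψ) (C : ℝ) (hψb : ∀ s, |ψ s| ≤ C)
    (hid : ∀ (x : SX) (y0 y : SY),
      (α * fX x + β * fY x + γ) + lam * (α * gX y + β * gY y + γ)
        + ((1 - lam ^ 2) / lam) * (α * gX y0 + β * gY y0 + γ) =
        ψ x - lam ^ 2 * (∫ s, ψ s ∂(σX (x, y)))
          - (1 - lam ^ 2) * (∫ s, ψ s ∂(σX0 y0)))
    (σY0 : Measure SY) [IsProbabilityMeasure σY0]
    (ν : ℕ → Measure (SX × SY)) (hν : ∀ t, IsProbabilityMeasure (ν t))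
    (hν0 : ∀ E : Set SX, MeasurableSet E →
      ν 0 (E ×ˢ (Set.univ : Set SY)) = ∫⁻ y0, σX0 y0 E ∂σY0)
    (hνsucc : ∀ (t : ℕ) (E : Set SX), MeasurableSet E →
      ν (t + 1) (E ×ˢ (Set.univ : Set SY)) = ∫⁻ q, σX q E ∂(ν t)) :
    α * ((1 - lam) * ((∫ y0, gX y0 ∂σY0) + ∑' t : ℕ, lam ^ (2 * t + 1) *
          ∫ q, (fX q.1 + lam * gX q.2) ∂(ν t)))
      + β * ((1 - lam) * ((∫ y0, gY y0 ∂σY0) + ∑' t : ℕ, lam ^ (2 * t + 1) *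
          ∫ q, (fY q.1 + lam * gY q.2) ∂(ν t)))
      + γ = 0 := by
  have hlamne : lam ≠ 0 := ne_of_gt hlam0
  have hlam2pos : (0:ℝ) < 1 - lam ^ 2 := by nlinarith
  have hlam2ne : (1:ℝ) - lam ^ 2 ≠ 0 := ne_of_gt hlam2pos
  have hgeo0 : (0:ℝ) ≤ lam ^ 2 := by positivity
  have hgeo1 : lam ^ 2 < 1 := by nlinarith
  -- nonemptiness
  have hSY : Nonempty SY := by
    by_contra h
    rw [not_nonempty_iff] at h
    have h1 : σY0 Set.univ = 1 := measure_univ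
    rw [Set.univ_eq_empty_iff.mpr h, measure_empty] at h1
    exact zero_ne_one h1
  obtain ⟨ys⟩ := hSY
  have hSX : Nonempty SX := by
    by_contra h
    rw [not_nonempty_iff] at h
    have h1 : σX0 ys Set.univ = 1 := measure_univ
    rw [Set.univ_eq_empty_iff.mpr h, measure_empty] at h1
    exact zero_ne_one h1
  obtain ⟨xs⟩ := hSX
  have hC0 : 0 ≤ C := le_trans (abs_nonneg _) (hψb xs)
  have hCf0 : 0 ≤ Cf := le_trans (abs_nonneg _) (hfXb xs)
  -- abbreviations
  set H : SX → ℝ := fun x => α * fX x + β * fY x + γ with hHdef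
  set K : SY → ℝ := fun y => α * gX y + β * gY y + γ with hKdef
  set S : SY → ℝ := fun y0 => ∫ s, ψ s ∂(σX0 y0) with hSdef
  set T : SX × SY → ℝ := fun q => ∫ s, ψ s ∂(σX q) with hTdef
  -- replace the division (1-lam^2)/lam by an opaque constant e
  obtain ⟨e, he⟩ : ∃ e : ℝ, (1 - lam ^ 2) / lam = e := ⟨_, rfl⟩
  have hee : e * lam = 1 - lam ^ 2 := by
    rw [← he]; exact div_mul_cancel₀ _ hlamne
  have hid' : ∀ (x : SX) (y0 y : SY),
      H x + lam * K y + e * K y0 =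
        ψ x - lam ^ 2 * T (x, y) - (1 - lam ^ 2) * S y0 := by
    intro x y0 y
    have h := hid x y0 y
    rw [he] at h
    simp only [hHdef, hKdef, hSdef, hTdef]
    exact h
  set c : ℝ := ψ xs - lam ^ 2 * T (xs, ys) - (H xs + lam * K ys) with hcdef
  have hc : ∀ y0, e * K y0 + (1 - lam ^ 2) * S y0 = c := by
    intro y0
    have h1 := hid' xs y0 ys
    rw [hcdef]
    linear_combination h1
  have hTsolve : ∀ (x : SX) (y : SY),
      lam ^ 2 * T (x, y) = ψ x - H x - lam * K y - c := by
    intro x y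
    have h1 := hid' x ys y
    have h2 := hc ys
    linear_combination h1 - h2
  -- measurability and bounds
  have hHm : Measurable H := ((hfXm.const_mul α).add (hfYm.const_mul β)).add_const γ
  have hKm : Measurable K := ((hgXm.const_mul α).add (hgYm.const_mul β)).add_const γ
  have hTb : ∀ q, |T q| ≤ C := fun q => bdd_integral_abs_le (σX q) hψb
  have hSb : ∀ y0, |S y0| ≤ C := fun y0 => bdd_integral_abs_le (σX0 y0) hψb
  have hTm : Measurable T := by
    have h1 : Measurable (fun q : SX × SY => lam ^ 2 * T q) := by
      have heq : (fun q : SX × SY => lam ^ 2 * T q)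
          = fun q : SX × SY => ψ q.1 - H q.1 - lam * K q.2 - c :=
        funext fun q => hTsolve q.1 q.2
      rw [heq]
      exact (((hψm.comp measurable_fst).sub (hHm.comp measurable_fst)).sub
        ((hKm.comp measurable_snd).const_mul lam)).sub_const c
    have heq2 : T = fun q : SX × SY => (lam ^ 2)⁻¹ * (lam ^ 2 * T q) :=
      funext fun q => by
        rw [← mul_assoc, inv_mul_cancel₀ (pow_ne_zero 2 hlamne), one_mul]
    rw [heq2]
    exact h1.const_mul _
  have hSm : Measurable S := by
    have h1 : Measurable (fun y0 : SY => (1 - lam ^ 2) * S y0) := by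
      have heq : (fun y0 : SY => (1 - lam ^ 2) * S y0)
          = fun y0 : SY => c - e * K y0 := by
        funext y0
        have h := hc y0
        linear_combination h
      rw [heq]
      exact (hKm.const_mul e).const_sub c
    have heq2 : S = fun y0 : SY => (1 - lam ^ 2)⁻¹ * ((1 - lam ^ 2) * S y0) :=
      funext fun y0 => by
        rw [← mul_assoc, inv_mul_cancel₀ hlam2ne, one_mul]
    rw [heq2]
    exact h1.const_mul _
  -- the sequence a
  set a : ℕ → ℝ := fun t => ∫ q, ψ q.1 ∂(ν t) with hadef
  have hab : ∀ t, |a t| ≤ C := by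
    intro t
    haveI := hν t
    exact bdd_integral_abs_le (ν t) (f := fun q : SX × SY => ψ q.1) (fun q => hψb q.1)
  have hstep : ∀ t, ∫ q, T q ∂(ν t) = a (t + 1) := by
    intro t
    haveI := hν t
    exact marg (ν t) σX (ν (t + 1)) (hνsucc t) hψm hψb
  have ha0 : ∫ y0, S y0 ∂σY0 = a 0 := marg σY0 σX0 (ν 0) hν0 hψm hψb
  -- per-round integral identities
  have hu : ∀ t, ∫ q, (H q.1 + lam * K q.2) ∂(ν t) = a t - lam ^ 2 * a (t + 1) - c := by
    intro t
    haveI := hν t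
    have i1 : Integrable (fun q : SX × SY => ψ q.1) (ν t) :=
      bdd_integrable _ (hψm.comp measurable_fst) (fun q => hψb q.1)
    have i2 : Integrable (fun q : SX × SY => lam ^ 2 * T q) (ν t) :=
      (bdd_integrable _ hTm hTb).const_mul _
    have i12 : Integrable (fun q : SX × SY => ψ q.1 - lam ^ 2 * T q) (ν t) := i1.sub i2
    have hpt : ∀ q : SX × SY, H q.1 + lam * K q.2 = ψ q.1 - lam ^ 2 * T q - c := by
      intro q
      have := hTsolve q.1 q.2
      linarith
    calc ∫ q, (H q.1 + lam * K q.2) ∂(ν t)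
        = ∫ q, (ψ q.1 - lam ^ 2 * T q - c) ∂(ν t) := integral_congr_ae (ae_of_all _ hpt)
      _ = (∫ q, ψ q.1 ∂(ν t)) - lam ^ 2 * ∫ q, T q ∂(ν t) - c := by
          rw [integral_sub i12 (integrable_const c), integral_sub i1 i2,
            integral_const_mul, integral_const]
          simp
      _ = a t - lam ^ 2 * a (t + 1) - c := by rw [hstep t]
  -- integrability of goal integrands
  have hXm : Measurable (fun q : SX × SY => fX q.1 + lam * gX q.2) :=
    (hfXm.comp measurable_fst).add ((hgXm.comp measurable_snd).const_mul lam)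
  have hYm : Measurable (fun q : SX × SY => fY q.1 + lam * gY q.2) :=
    (hfYm.comp measurable_fst).add ((hgYm.comp measurable_snd).const_mul lam)
  have hXb : ∀ q : SX × SY, |fX q.1 + lam * gX q.2| ≤ Cf + lam * Cf := by
    intro q
    calc |fX q.1 + lam * gX q.2| ≤ |fX q.1| + |lam * gX q.2| := abs_add_le _ _
      _ ≤ Cf + lam * Cf := by
          rw [abs_mul, abs_of_pos hlam0]
          have := hgXb q.2
          have := hfXb q.1
          nlinarith
  have hYb : ∀ q : SX × SY, |fY q.1 + lam * gY q.2| ≤ Cf + lam * Cf := by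
    intro q
    calc |fY q.1 + lam * gY q.2| ≤ |fY q.1| + |lam * gY q.2| := abs_add_le _ _
      _ ≤ Cf + lam * Cf := by
          rw [abs_mul, abs_of_pos hlam0]
          have := hgYb q.2
          have := hfYb q.1
          nlinarith
  have hIXb : ∀ t, |∫ q, (fX q.1 + lam * gX q.2) ∂(ν t)| ≤ Cf + lam * Cf := by
    intro t; haveI := hν t; exact bdd_integral_abs_le (ν t) hXb
  have hIYb : ∀ t, |∫ q, (fY q.1 + lam * gY q.2) ∂(ν t)| ≤ Cf + lam * Cf := by
    intro t; haveI := hν t; exact bdd_integral_abs_le (ν t) hYb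
  -- the combined per-round value
  have huv : ∀ t, ∫ q, (H q.1 + lam * K q.2) ∂(ν t) =
      α * (∫ q, (fX q.1 + lam * gX q.2) ∂(ν t))
        + β * (∫ q, (fY q.1 + lam * gY q.2) ∂(ν t)) + γ * (1 + lam) := by
    intro t
    haveI := hν t
    have iX : Integrable (fun q : SX × SY => fX q.1 + lam * gX q.2) (ν t) :=
      bdd_integrable _ hXm hXb
    have iY : Integrable (fun q : SX × SY => fY q.1 + lam * gY q.2) (ν t) :=
      bdd_integrable _ hYm hYb
    have hpt : ∀ q : SX × SY, H q.1 + lam * K q.2 =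
        α * (fX q.1 + lam * gX q.2) + β * (fY q.1 + lam * gY q.2) + γ * (1 + lam) := by
      intro q
      simp only [hHdef, hKdef]
      ring
    have iXY : Integrable (fun q : SX × SY =>
        α * (fX q.1 + lam * gX q.2) + β * (fY q.1 + lam * gY q.2)) (ν t) :=
      (iX.const_mul α).add (iY.const_mul β)
    calc ∫ q, (H q.1 + lam * K q.2) ∂(ν t)
        = ∫ q, (α * (fX q.1 + lam * gX q.2) + β * (fY q.1 + lam * gY q.2) + γ * (1 + lam)) ∂(ν t) :=
          integral_congr_ae (ae_of_all _ hpt)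
      _ = α * (∫ q, (fX q.1 + lam * gX q.2) ∂(ν t))
            + β * (∫ q, (fY q.1 + lam * gY q.2) ∂(ν t)) + γ * (1 + lam) := by
          rw [integral_add iXY (integrable_const _),
            integral_add (iX.const_mul α) (iY.const_mul β), integral_const_mul,
            integral_const_mul, integral_const]
          simp
  -- power identities and summability
  have hpow : ∀ t : ℕ, lam ^ (2 * t + 1) = lam * (lam ^ 2) ^ t := by
    intro t
    rw [pow_succ, ← pow_mul, mul_comm (lam ^ (2 * t)) lam]
  have hsummX : Summable (fun t : ℕ =>
      lam ^ (2 * t + 1) * ∫ q, (fX q.1 + lam * gX q.2) ∂(ν t)) := by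
    refine Summable.of_norm_bounded
      ((summable_geometric_of_lt_one hgeo0 hgeo1).mul_left (lam * (Cf + lam * Cf))) fun t => ?_
    rw [Real.norm_eq_abs, abs_mul, abs_of_nonneg (pow_nonneg hlam0.le _), hpow t]
    calc lam * (lam ^ 2) ^ t * |∫ q, (fX q.1 + lam * gX q.2) ∂(ν t)|
        ≤ lam * (lam ^ 2) ^ t * (Cf + lam * Cf) :=
          mul_le_mul_of_nonneg_left (hIXb t) (by positivity)
      _ = lam * (Cf + lam * Cf) * (lam ^ 2) ^ t := by ring
  have hsummY : Summable (fun t : ℕ =>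
      lam ^ (2 * t + 1) * ∫ q, (fY q.1 + lam * gY q.2) ∂(ν t)) := by
    refine Summable.of_norm_bounded
      ((summable_geometric_of_lt_one hgeo0 hgeo1).mul_left (lam * (Cf + lam * Cf))) fun t => ?_
    rw [Real.norm_eq_abs, abs_mul, abs_of_nonneg (pow_nonneg hlam0.le _), hpow t]
    calc lam * (lam ^ 2) ^ t * |∫ q, (fY q.1 + lam * gY q.2) ∂(ν t)|
        ≤ lam * (lam ^ 2) ^ t * (Cf + lam * Cf) :=
          mul_le_mul_of_nonneg_left (hIYb t) (by positivity)
      _ = lam * (Cf + lam * Cf) * (lam ^ 2) ^ t := by ring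
  obtain ⟨d, hd⟩ : ∃ d : ℝ, d * (1 - lam ^ 2) = lam :=
    ⟨lam / (1 - lam ^ 2), div_mul_cancel₀ lam hlam2ne⟩
  have hddef : d = lam / (1 - lam ^ 2) := by
    rw [eq_div_iff hlam2ne]; exact hd
  have hGsum : HasSum (fun t : ℕ => lam ^ (2 * t + 1)) d := by
    have h2 : (fun t : ℕ => lam ^ (2 * t + 1)) = fun t => lam * (lam ^ 2) ^ t := funext hpow
    rw [h2, hddef, div_eq_mul_inv]
    exact (hasSum_geometric_of_lt_one hgeo0 hgeo1).mul_left lam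
  -- name the two series sums
  set PX : ℝ := ∑' t : ℕ, lam ^ (2 * t + 1) * ∫ q, (fX q.1 + lam * gX q.2) ∂(ν t) with hPX
  set PY : ℝ := ∑' t : ℕ, lam ^ (2 * t + 1) * ∫ q, (fY q.1 + lam * gY q.2) ∂(ν t) with hPY
  -- the combined series and its two evaluations
  set w : ℕ → ℝ := fun t => lam ^ (2 * t + 1) * ∫ q, (H q.1 + lam * K q.2) ∂(ν t) with hwdef
  have hWhs : HasSum w
      ((α * PX + β * PY) + γ * (1 + lam) * d) := by
    have h1 := ((hsummX.hasSum.mul_left α).add (hsummY.hasSum.mul_left β)).add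
      (hGsum.mul_left (γ * (1 + lam)))
    have heq : w = fun t : ℕ =>
        (α * (lam ^ (2 * t + 1) * ∫ q, (fX q.1 + lam * gX q.2) ∂(ν t))
          + β * (lam ^ (2 * t + 1) * ∫ q, (fY q.1 + lam * gY q.2) ∂(ν t)))
          + γ * (1 + lam) * lam ^ (2 * t + 1) := by
      funext t
      rw [hwdef]
      simp only []
      rw [huv t]
      ring
    rw [heq]
    exact h1
  -- telescoping evaluation
  set F : ℕ → ℝ := fun t => lam ^ (2 * t + 1) * a t with hFdef
  have hwF : ∀ t, w t = (F t - F (t + 1)) - c * lam ^ (2 * t + 1) := by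
    intro t
    have hpw : lam ^ (2 * (t + 1) + 1) = lam ^ (2 * t + 1) * lam ^ 2 := by
      rw [show 2 * (t + 1) + 1 = (2 * t + 1) + 2 by ring, pow_add]
    rw [hwdef]
    simp only [hFdef]
    rw [hu t, hpw]
    ring
  have hpartial : ∀ n, ∑ t ∈ Finset.range n, w t =
      (F 0 - F n) - c * ∑ t ∈ Finset.range n, lam ^ (2 * t + 1) := by
    intro n
    calc ∑ t ∈ Finset.range n, w t
        = ∑ t ∈ Finset.range n, ((F t - F (t + 1)) - c * lam ^ (2 * t + 1)) :=
          Finset.sum_congr rfl fun t _ => hwF t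
      _ = (∑ t ∈ Finset.range n, (F t - F (t + 1)))
            - ∑ t ∈ Finset.range n, c * lam ^ (2 * t + 1) := by rw [Finset.sum_sub_distrib]
      _ = (F 0 - F n) - c * ∑ t ∈ Finset.range n, lam ^ (2 * t + 1) := by
          rw [Finset.sum_range_sub' F n, Finset.mul_sum]
  have hFlim : Filter.Tendsto F Filter.atTop (nhds 0) := by
    apply squeeze_zero_norm (a := fun n => (lam * C) * (lam ^ 2) ^ n)
    · intro n
      rw [Real.norm_eq_abs, hFdef]
      simp only []
      rw [abs_mul, abs_of_nonneg (pow_nonneg hlam0.le _), hpow n]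
      calc lam * (lam ^ 2) ^ n * |a n| ≤ lam * (lam ^ 2) ^ n * C :=
            mul_le_mul_of_nonneg_left (hab n) (by positivity)
        _ = lam * C * (lam ^ 2) ^ n := by ring
    · have := (tendsto_pow_atTop_nhds_zero_of_lt_one hgeo0 hgeo1).const_mul (lam * C)
      simpa using this
  have hpartlim : Filter.Tendsto (fun n => ∑ t ∈ Finset.range n, w t) Filter.atTop
      (nhds ((F 0 - 0) - c * d)) := by
    have h1 := (tendsto_const_nhds (x := F 0) (f := Filter.atTop (α := ℕ))).sub hFlim
    have h2 := h1.sub (hGsum.tendsto_sum_nat.const_mul c)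
    refine h2.congr fun n => (hpartial n).symm
  have hF0 : F 0 = lam * a 0 := by
    rw [hFdef]
    simp only []
    norm_num
  have E1 : (α * PX + β * PY) + γ * (1 + lam) * d =
      lam * a 0 - c * d := by
    have := tendsto_nhds_unique hWhs.tendsto_sum_nat hpartlim
    rw [this, hF0]
    ring
  -- evaluate the opening-move integral
  have E2 : ∫ y0, K y0 ∂σY0 =
      α * (∫ y0, gX y0 ∂σY0) + β * (∫ y0, gY y0 ∂σY0) + γ := by
    have iX : Integrable gX σY0 := bdd_integrable _ hgXm hgXb
    have iY : Integrable gY σY0 := bdd_integrable _ hgYm hgYb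
    have iXY : Integrable (fun y0 => α * gX y0 + β * gY y0) σY0 :=
      (iX.const_mul α).add (iY.const_mul β)
    simp only [hKdef]
    rw [integral_add iXY (integrable_const _),
      integral_add (iX.const_mul α) (iY.const_mul β),
      integral_const_mul, integral_const_mul, integral_const]
    simp
  have hKform : ∀ y0, K y0 = d * c - lam * S y0 := by
    intro y0
    have h := hc y0
    apply mul_left_cancel₀ hlam2ne
    linear_combination lam * h - K y0 * hee - c * hd
  have E3 : ∫ y0, K y0 ∂σY0 = d * c - lam * a 0 := by
    calc ∫ y0, K y0 ∂σY0
        = ∫ y0, (d * c - lam * S y0) ∂σY0 :=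
          integral_congr_ae (ae_of_all _ hKform)
      _ = d * c - lam * ∫ y0, S y0 ∂σY0 := by
          rw [integral_sub (integrable_const _) ((bdd_integrable _ hSm hSb).const_mul lam),
            integral_const, integral_const_mul]
          simp
      _ = d * c - lam * a 0 := by rw [ha0]
  linear_combination (1 - lam) * E1 - (1 - lam) * E2 + (1 - lam) * E3 - γ * hd
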